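/- For every real number x with |x| < π/2, one has ((π² − 4x²)/π²)^(π²/8) ≤ cos x ≤ (π² − 4x²)/π². -/

import Mathlib

open Real

open Set


lemma my_pi_sq_gt_eight : (8:ℝ) < π ^ 2 := by nlinarith [Real.pi_gt_three]

lemma my_w_deriv (t : ℝ) : HasDerivAt (fun t : ℝ => (π ^ 2 - 4 * t ^ 2) * Real.sin t - 8 * t * Real.cos t)
    ((π ^ 2 - 8 - 4 * t ^ 2) * Real.cos t) t := by
  have hp : HasDerivAt (fun t : ℝ => π ^ 2 - 4 * t ^ 2) (-(8 * t)) t := by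
    have := ((hasDerivAt_pow 2 t).const_mul (4:ℝ))
    have h2 := (hasDerivAt_const t (π ^ 2)).sub this
    exact h2.congr_deriv (by simp; ring)
  have h8 : HasDerivAt (fun t : ℝ => 8 * t) (8:ℝ) t := by
    simpa using (hasDerivAt_id t).const_mul (8:ℝ)
  have := (hp.mul (Real.hasDerivAt_sin t)).sub (h8.mul (Real.hasDerivAt_cos t))
  exact this.congr_deriv (by ring)

lemma my_w_nonneg {x : ℝ} (hx : x ∈ Icc 0 (π / 2)) :
    0 ≤ (π ^ 2 - 4 * x ^ 2) * Real.sin x - 8 * x * Real.cos x := by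
  set w : ℝ → ℝ := fun t => (π ^ 2 - 4 * t ^ 2) * Real.sin t - 8 * t * Real.cos t with hw
  have hcont : Continuous w := by fun_prop
  set c : ℝ := Real.sqrt (π ^ 2 - 8) / 2 with hc
  have hπ := my_pi_sq_gt_eight
  have hππ := Real.pi_pos
  have hc0 : 0 ≤ c := by positivity
  have hcsq : 4 * c ^ 2 = π ^ 2 - 8 := by
    rw [hc]; rw [div_pow, Real.sq_sqrt (by linarith)]; ring
  have hcle : c ≤ π / 2 := by
    rw [hc, div_le_div_iff_of_pos_right (by norm_num)]
    calc Real.sqrt (π ^ 2 - 8) ≤ Real.sqrt (π ^ 2) := by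
          apply Real.sqrt_le_sqrt; linarith
      _ = π := by rw [Real.sqrt_sq hππ.le]
  have hmono : MonotoneOn w (Icc 0 c) := by
    apply monotoneOn_of_hasDerivWithinAt_nonneg (convex_Icc _ _) hcont.continuousOn
      (f' := fun t => (π ^ 2 - 8 - 4 * t ^ 2) * Real.cos t)
      (fun t ht => (my_w_deriv t).hasDerivWithinAt)
    intro t ht
    rw [interior_Icc] at ht
    have h1 : 4 * t ^ 2 < π ^ 2 - 8 := by nlinarith [ht.1, ht.2]
    have h2 : 0 < Real.cos t := Real.cos_pos_of_mem_Ioo ⟨by linarith [ht.1, Real.pi_pos], by linarith [ht.2, hcle]⟩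
    nlinarith
  have hanti : AntitoneOn w (Icc c (π / 2)) := by
    apply antitoneOn_of_hasDerivWithinAt_nonpos (convex_Icc _ _) hcont.continuousOn
      (f' := fun t => (π ^ 2 - 8 - 4 * t ^ 2) * Real.cos t)
      (fun t ht => (my_w_deriv t).hasDerivWithinAt)
    intro t ht
    rw [interior_Icc] at ht
    have h1 : π ^ 2 - 8 ≤ 4 * t ^ 2 := by nlinarith [ht.1, ht.2, hc0]
    have h2 : 0 ≤ Real.cos t := Real.cos_nonneg_of_mem_Icc ⟨by linarith [ht.1, hc0], ht.2.le⟩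
    nlinarith
  have hw0 : w 0 = 0 := by simp [hw]
  have hwpi : w (π / 2) = 0 := by
    simp only [hw, Real.sin_pi_div_two, Real.cos_pi_div_two]
    ring
  rcases le_total x c with h | h
  · have := hmono ⟨le_refl 0, hc0⟩ ⟨hx.1, h⟩ hx.1
    rw [hw0] at this; exact this
  · have := hanti ⟨h, hx.2⟩ ⟨hcle, le_refl _⟩ hx.2
    rw [hwpi] at this; exact this


lemma my_tanc_mono : StrictMonoOn (fun t : ℝ => Real.tan t / t) (Ioo 0 (π / 2)) := by
  apply strictMonoOn_of_hasDerivWithinAt_pos (convex_Ioo _ _)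
    (f' := fun t => ((1 / Real.cos t ^ 2) * t - Real.tan t * 1) / t ^ 2)
  · intro t ht
    have hcos : Real.cos t ≠ 0 :=
      (Real.cos_pos_of_mem_Ioo ⟨by linarith [ht.1, Real.pi_pos], ht.2⟩).ne'
    exact ((Real.hasDerivAt_tan hcos).continuousAt.continuousWithinAt.div
      continuousWithinAt_id ht.1.ne')
  · intro t ht
    rw [interior_Ioo] at ht
    have hcos : Real.cos t ≠ 0 :=
      (Real.cos_pos_of_mem_Ioo ⟨by linarith [ht.1, Real.pi_pos], ht.2⟩).ne'
    exact (((Real.hasDerivAt_tan hcos).div (hasDerivAt_id t) ht.1.ne')).hasDerivWithinAt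
  · intro t ht
    rw [interior_Ioo] at ht
    have hcos : 0 < Real.cos t :=
      Real.cos_pos_of_mem_Ioo ⟨by linarith [ht.1, Real.pi_pos], ht.2⟩
    have hsc : Real.sin t * Real.cos t < t := by
      have h2 : Real.sin (2 * t) < 2 * t := Real.sin_lt (by linarith [ht.1])
      rw [Real.sin_two_mul] at h2; linarith
    have hnum : 0 < (1 / Real.cos t ^ 2) * t - Real.tan t * 1 := by
      rw [Real.tan_eq_sin_div_cos]
      have : (1 / Real.cos t ^ 2) * t - Real.sin t / Real.cos t * 1
          = (t - Real.sin t * Real.cos t) / Real.cos t ^ 2 := by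
        field_simp
      rw [this]
      exact div_pos (by linarith) (by positivity)
    exact div_pos hnum (pow_pos ht.1 2)

lemma my_u_deriv (t : ℝ) : HasDerivAt
    (fun t : ℝ => π ^ 2 * t * Real.cos t - (π ^ 2 - 4 * t ^ 2) * Real.sin t)
    (t * (4 * t * Real.cos t - (π ^ 2 - 8) * Real.sin t)) t := by
  have hp : HasDerivAt (fun t : ℝ => π ^ 2 - 4 * t ^ 2) (-(8 * t)) t := by
    have := ((hasDerivAt_pow 2 t).const_mul (4:ℝ))
    have h2 := (hasDerivAt_const t (π ^ 2)).sub this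
    exact h2.congr_deriv (by simp; ring)
  have hq : HasDerivAt (fun t : ℝ => π ^ 2 * t) (π ^ 2) t := by
    simpa using (hasDerivAt_id t).const_mul (π ^ 2)
  have := (hq.mul (Real.hasDerivAt_cos t)).sub (hp.mul (Real.hasDerivAt_sin t))
  exact this.congr_deriv (by ring)

lemma my_u_nonneg {x : ℝ} (hx : x ∈ Icc 0 (π / 2)) :
    0 ≤ π ^ 2 * x * Real.cos x - (π ^ 2 - 4 * x ^ 2) * Real.sin x := by
  set u : ℝ → ℝ := fun t => π ^ 2 * t * Real.cos t - (π ^ 2 - 4 * t ^ 2) * Real.sin t with hu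
  have hcont : Continuous u := by fun_prop
  have hπ := my_pi_sq_gt_eight
  have hππ := Real.pi_pos
  have hu0 : u 0 = 0 := by simp [hu]
  have hupi : u (π / 2) = 0 := by
    simp only [hu, Real.sin_pi_div_two, Real.cos_pi_div_two]
    ring
  show 0 ≤ u x
  rcases eq_or_lt_of_le hx.1 with h0 | h0
  · rw [← h0, hu0]
  rcases eq_or_lt_of_le hx.2 with hπ2 | hπ2
  · rw [hπ2, hupi]
  have hxIoo : x ∈ Ioo 0 (π / 2) := ⟨h0, hπ2⟩
  rcases le_or_gt (Real.tan x / x) (4 / (π ^ 2 - 8)) with hcase | hcase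
  · -- u monotone on [0, x]
    have hmono : MonotoneOn u (Icc 0 x) := by
      apply monotoneOn_of_hasDerivWithinAt_nonneg (convex_Icc _ _) hcont.continuousOn
        (f' := fun t => t * (4 * t * Real.cos t - (π ^ 2 - 8) * Real.sin t))
        (fun t ht => (my_u_deriv t).hasDerivWithinAt)
      intro t ht
      rw [interior_Icc] at ht
      have htIoo : t ∈ Ioo 0 (π / 2) := ⟨ht.1, lt_trans ht.2 hπ2⟩
      have hcos : 0 < Real.cos t :=
        Real.cos_pos_of_mem_Ioo ⟨by linarith [ht.1], htIoo.2⟩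
      have hlt : Real.tan t / t < Real.tan x / x := my_tanc_mono htIoo hxIoo ht.2
      have htan : (π ^ 2 - 8) * Real.tan t < 4 * t := by
        have h1 : Real.tan t / t < 4 / (π ^ 2 - 8) := lt_of_lt_of_le hlt hcase
        rw [div_lt_div_iff₀ ht.1 (by linarith)] at h1
        linarith
      have hsin : Real.sin t = Real.tan t * Real.cos t := by
        rw [Real.tan_eq_sin_div_cos]; field_simp
      have : 0 ≤ 4 * t * Real.cos t - (π ^ 2 - 8) * Real.sin t := by
        rw [hsin]; nlinarith
      nlinarith [ht.1]
    have := hmono (left_mem_Icc.2 hx.1) (right_mem_Icc.2 hx.1) hx.1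
    rw [hu0] at this; exact this
  · -- u antitone on [x, π/2]
    have hanti : AntitoneOn u (Icc x (π / 2)) := by
      apply antitoneOn_of_hasDerivWithinAt_nonpos (convex_Icc _ _) hcont.continuousOn
        (f' := fun t => t * (4 * t * Real.cos t - (π ^ 2 - 8) * Real.sin t))
        (fun t ht => (my_u_deriv t).hasDerivWithinAt)
      intro t ht
      rw [interior_Icc] at ht
      have htIoo : t ∈ Ioo 0 (π / 2) := ⟨lt_trans h0 ht.1, ht.2⟩
      have hcos : 0 < Real.cos t :=
        Real.cos_pos_of_mem_Ioo ⟨by linarith [htIoo.1], htIoo.2⟩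
      have hlt : Real.tan x / x < Real.tan t / t := my_tanc_mono hxIoo htIoo ht.1
      have htan : 4 * t < (π ^ 2 - 8) * Real.tan t := by
        have h1 : 4 / (π ^ 2 - 8) < Real.tan t / t := lt_trans hcase hlt
        rw [div_lt_div_iff₀ (by linarith) htIoo.1] at h1
        linarith
      have hsin : Real.sin t = Real.tan t * Real.cos t := by
        rw [Real.tan_eq_sin_div_cos]; field_simp
      have : 4 * t * Real.cos t - (π ^ 2 - 8) * Real.sin t ≤ 0 := by
        rw [hsin]; nlinarith
      nlinarith [htIoo.1]
    have := hanti (left_mem_Icc.2 hx.2) (right_mem_Icc.2 hx.2) hx.2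
    rw [hupi] at this; exact this


lemma my_p_deriv (t : ℝ) : HasDerivAt (fun t : ℝ => (π ^ 2 - 4 * t ^ 2) / π ^ 2)
    (-(8 * t) / π ^ 2) t := by
  have hp : HasDerivAt (fun t : ℝ => π ^ 2 - 4 * t ^ 2) (-(8 * t)) t := by
    have := ((hasDerivAt_pow 2 t).const_mul (4:ℝ))
    have h2 := (hasDerivAt_const t (π ^ 2)).sub this
    exact h2.congr_deriv (by simp; ring)
  exact hp.div_const _

lemma my_key {x : ℝ} (hx : x ∈ Ico 0 (π / 2)) :
    π ^ 2 / 8 * Real.log ((π ^ 2 - 4 * x ^ 2) / π ^ 2) ≤ Real.log (Real.cos x) ∧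
      Real.log (Real.cos x) ≤ Real.log ((π ^ 2 - 4 * x ^ 2) / π ^ 2) := by
  have hππ := Real.pi_pos
  have hπ8 := my_pi_sq_gt_eight
  set p : ℝ → ℝ := fun t => (π ^ 2 - 4 * t ^ 2) / π ^ 2 with hpdef
  have hpos : ∀ t ∈ Icc 0 x, 0 < p t := by
    intro t ht
    have : 4 * t ^ 2 < π ^ 2 := by nlinarith [ht.1, ht.2, hx.1, hx.2]
    have : 0 < π ^ 2 - 4 * t ^ 2 := by linarith
    positivity
  have hcpos : ∀ t ∈ Icc 0 x, 0 < Real.cos t := fun t ht =>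
    Real.cos_pos_of_mem_Ioo ⟨by linarith [ht.1], lt_of_le_of_lt ht.2 hx.2⟩
  have hpcont : ContinuousOn (fun t => Real.log (p t)) (Icc 0 x) := by
    apply ContinuousOn.log (by fun_prop)
    exact fun t ht => (hpos t ht).ne'
  have hccont : ContinuousOn (fun t => Real.log (Real.cos t)) (Icc 0 x) := by
    apply ContinuousOn.log Real.continuous_cos.continuousOn
    exact fun t ht => (hcpos t ht).ne'
  have hIoosub : Ioo 0 x ⊆ Icc 0 x := Ioo_subset_Icc_self
  -- inner facts on Ioo 0 x
  have hG : MonotoneOn (fun t => Real.log (p t) - Real.log (Real.cos t)) (Icc 0 x) := by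
    apply monotoneOn_of_hasDerivWithinAt_nonneg (convex_Icc _ _) (hpcont.sub hccont)
      (f' := fun t => (-(8 * t) / π ^ 2) / p t - (-Real.sin t) / Real.cos t)
    · intro t ht
      rw [interior_Icc] at ht
      exact (((my_p_deriv t).log (hpos t (hIoosub ht)).ne').sub
        ((Real.hasDerivAt_cos t).log (hcpos t (hIoosub ht)).ne')).hasDerivWithinAt
    · intro t ht
      rw [interior_Icc] at ht
      have hP := hpos t (hIoosub ht)
      have hC := hcpos t (hIoosub ht)
      have hP' : 0 < π ^ 2 - 4 * t ^ 2 := by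
        have h := mul_pos hP (show (0:ℝ) < π ^ 2 by positivity)
        rwa [div_mul_cancel₀ _ (ne_of_gt (show (0:ℝ) < π ^ 2 by positivity))] at h
      have heq : (-(8 * t) / π ^ 2) / p t - (-Real.sin t) / Real.cos t
          = ((π ^ 2 - 4 * t ^ 2) * Real.sin t - 8 * t * Real.cos t)
            / ((π ^ 2 - 4 * t ^ 2) * Real.cos t) := by
        rw [hpdef]
        field_simp [show π ^ 2 - t ^ 2 * 4 ≠ 0 by linarith]
        ring
      rw [heq]
      apply div_nonneg _ (by positivity)
      exact my_w_nonneg ⟨ht.1.le, le_of_lt (lt_of_lt_of_le (lt_of_le_of_lt ht.2.le hx.2) le_rfl)⟩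
  have hF : MonotoneOn (fun t => Real.log (Real.cos t) - π ^ 2 / 8 * Real.log (p t)) (Icc 0 x) := by
    apply monotoneOn_of_hasDerivWithinAt_nonneg (convex_Icc _ _)
      (hccont.sub (continuousOn_const.mul hpcont))
      (f' := fun t => (-Real.sin t) / Real.cos t - π ^ 2 / 8 * ((-(8 * t) / π ^ 2) / p t))
    · intro t ht
      rw [interior_Icc] at ht
      exact (((Real.hasDerivAt_cos t).log (hcpos t (hIoosub ht)).ne').sub
        (((my_p_deriv t).log (hpos t (hIoosub ht)).ne').const_mul (π ^ 2 / 8))).hasDerivWithinAt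
    · intro t ht
      rw [interior_Icc] at ht
      have hP := hpos t (hIoosub ht)
      have hC := hcpos t (hIoosub ht)
      have hP' : 0 < π ^ 2 - 4 * t ^ 2 := by
        have h := mul_pos hP (show (0:ℝ) < π ^ 2 by positivity)
        rwa [div_mul_cancel₀ _ (ne_of_gt (show (0:ℝ) < π ^ 2 by positivity))] at h
      have heq : (-Real.sin t) / Real.cos t - π ^ 2 / 8 * ((-(8 * t) / π ^ 2) / p t)
          = (π ^ 2 * t * Real.cos t - (π ^ 2 - 4 * t ^ 2) * Real.sin t)
            / ((π ^ 2 - 4 * t ^ 2) * Real.cos t) := by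
        rw [hpdef]
        field_simp [show π ^ 2 - t ^ 2 * 4 ≠ 0 by linarith]
        ring
      rw [heq]
      apply div_nonneg _ (by positivity)
      exact my_u_nonneg ⟨ht.1.le, le_of_lt (lt_of_lt_of_le (lt_of_le_of_lt ht.2.le hx.2) le_rfl)⟩
  have hp0 : p 0 = 1 := by rw [hpdef]; norm_num
  have hmem0 : (0:ℝ) ∈ Icc 0 x := left_mem_Icc.2 hx.1
  have hmemx : x ∈ Icc 0 x := right_mem_Icc.2 hx.1
  constructor
  · have := hF hmem0 hmemx hx.1
    simp only [hp0, Real.cos_zero, Real.log_one, mul_zero, sub_zero] at this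
    linarith
  · have := hG hmem0 hmemx hx.1
    simp only [hp0, Real.cos_zero, Real.log_one] at this
    linarith


theorem stmt_1 (x : ℝ) (h1 : |x| < π / 2) :
    ((π ^ 2 - 4 * x ^ 2) / π ^ 2) ^ (π ^ 2 / 8) ≤ Real.cos x ∧
      Real.cos x ≤ (π ^ 2 - 4 * x ^ 2) / π ^ 2 := by
  have hmem : |x| ∈ Ico 0 (π / 2) := ⟨abs_nonneg x, h1⟩
  have hkey := my_key hmem
  rw [sq_abs] at hkey
  rw [Real.cos_abs] at hkey
  have hππ := Real.pi_pos
  have hcpos : 0 < Real.cos x := by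
    rw [← Real.cos_abs]
    exact Real.cos_pos_of_mem_Ioo ⟨by linarith [abs_nonneg x], h1⟩
  have hppos : 0 < (π ^ 2 - 4 * x ^ 2) / π ^ 2 := by
    have h2 : x ^ 2 = |x| ^ 2 := (sq_abs x).symm
    have : 4 * x ^ 2 < π ^ 2 := by
      rw [h2]; nlinarith [hmem.1, hmem.2]
    have : 0 < π ^ 2 - 4 * x ^ 2 := by linarith
    positivity
  constructor
  · rw [Real.rpow_def_of_pos hppos]
    calc Real.exp (Real.log ((π ^ 2 - 4 * x ^ 2) / π ^ 2) * (π ^ 2 / 8))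
        ≤ Real.exp (Real.log (Real.cos x)) := by
          apply Real.exp_le_exp.2; linarith [hkey.1]
      _ = Real.cos x := Real.exp_log hcpos
  · calc Real.cos x = Real.exp (Real.log (Real.cos x)) := (Real.exp_log hcpos).symm
      _ ≤ Real.exp (Real.log ((π ^ 2 - 4 * x ^ 2) / π ^ 2)) := Real.exp_le_exp.2 hkey.2
      _ = (π ^ 2 - 4 * x ^ 2) / π ^ 2 := Real.exp_log hppos
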